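/- Let A ⊆ {0,1}^{n_A} be a code with (symmetric) norm N_A with respect to its last coordinate, and B ⊆ {0,1}^{n_B} a code with norm N_B with respect to its first coordinate. Then the amalgamated direct sum A ⊕̇ B = {(a,0,b) : (a,0) ∈ A, (0,b) ∈ B} ∪ {(a,1,b) : (a,1) ∈ A, (1,b) ∈ B} ⊆ {0,1}^{n_A+n_B-1} has norm N_A + N_B - 1 with respect to coordinate n_A. -/

import Mathlib

open Finset

abbrev Vec (n : ℕ) := Fin n → Bool

noncomputable def dS {n : ℕ} (x : Vec n) (Y : Set (Vec n)) : ℕ∞ :=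
  ⨅ y ∈ Y, (hammingDist x y : ℕ∞)

noncomputable def dA {n : ℕ} (x : Vec n) (Y : Set (Vec n)) : ℕ∞ :=
  ⨅ y ∈ {y ∈ Y | ∀ i, x i ≤ y i}, (hammingDist x y : ℕ∞)

def sec {n : ℕ} (C : Set (Vec n)) (i : Fin n) (b : Bool) : Set (Vec n) :=
  {c ∈ C | c i = b}

def NormAt {n : ℕ} (C : Set (Vec n)) (i : Fin n) (N : ℕ) : Prop :=
  ∀ x : Vec n, dS x (sec C i false) + dS x (sec C i true) ≤ (N : ℕ∞)

def AsymNormAt {n : ℕ} (C : Set (Vec n)) (i : Fin n) (N : ℕ) : Prop :=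
  ∀ x : Vec n,
    (x i = false → dA x (sec C i false) + dA x (sec C i true) ≤ (N : ℕ∞)) ∧
    (x i = true → 2 * dA x (sec C i true) + 1 ≤ (N : ℕ∞))

def ads {nA nB : ℕ} (A : Set (Vec (nA+1))) (B : Set (Vec (nB+1))) :
    Set (Vec (nA+1+nB)) :=
  {z | ∃ (a : Fin nA → Bool) (t : Bool) (b : Fin nB → Bool),
    Fin.snoc a t ∈ A ∧ Fin.cons t b ∈ B ∧ z = Fin.append (Fin.snoc a t) b}

def flipCoord {n : ℕ} (x : Vec n) (i : Fin n) : Vec n := Function.update x i (!x i)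

def PatchedAt {n : ℕ} (S T : Set (Vec n)) (i : Fin n) (N : ℕ) : Prop :=
  ∀ x : Vec n, (dS x (sec S i false) + dS x (sec S i true) ≤ (N : ℕ∞))
    ∨ (x ∈ T ∧ flipCoord x i ∈ T)

def AsymPatchedAt {n : ℕ} (S T : Set (Vec n)) (i : Fin n) (N : ℕ) : Prop :=
  ∀ x : Vec n,
    (x i = false → (dA x (sec S i false) + dA x (sec S i true) ≤ (N : ℕ∞))
       ∨ (x ∈ T ∧ flipCoord x i ∈ T)) ∧
    (x i = true → (2 * dA x (sec S i true) + 1 ≤ (N : ℕ∞)) ∨ x ∈ T)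

lemma hd_split {m n : ℕ} (x y : Fin (m+n) → Bool) :
    hammingDist x y = hammingDist (x ∘ Fin.castAdd n) (y ∘ Fin.castAdd n)
      + hammingDist (x ∘ Fin.natAdd m) (y ∘ Fin.natAdd m) := by
  simp only [hammingDist, Finset.card_filter]
  rw [Fin.sum_univ_add]
  rfl

lemma hd_cons {n : ℕ} (x y : Fin (n+1) → Bool) :
    hammingDist x y = (if x 0 = y 0 then 0 else 1) + hammingDist (Fin.tail x) (Fin.tail y) := by
  simp only [hammingDist, Finset.card_filter]
  rw [Fin.sum_univ_succ]
  by_cases h : x 0 = y 0 <;> simp [h, Fin.tail] <;>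
    exact Finset.sum_congr rfl (fun i _ => by by_cases h' : x i.succ = y i.succ <;> simp [h'])

lemma dS_le {n : ℕ} {x y : Vec n} {Y : Set (Vec n)} (h : y ∈ Y) :
    dS x Y ≤ (hammingDist x y : ℕ∞) := iInf₂_le y h

lemma dS_exists {n : ℕ} (x : Vec n) (Y : Set (Vec n)) (h : dS x Y ≠ ⊤) :
    ∃ y ∈ Y, (hammingDist x y : ℕ∞) = dS x Y := by
  have hlt : dS x Y < dS x Y + 1 := (ENat.lt_add_one_iff h).mpr le_rfl
  conv at hlt => lhs; unfold dS
  rw [iInf_lt_iff] at hlt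
  obtain ⟨y, hy⟩ := hlt
  rw [iInf_lt_iff] at hy
  obtain ⟨hyY, hd⟩ := hy
  exact ⟨y, hyY, le_antisymm ((ENat.lt_add_one_iff h).mp hd) (dS_le hyY)⟩

lemma sum_ne_top {m : ℕ} {u v : ℕ∞} (h : u + v ≤ (m : ℕ∞)) : u ≠ ⊤ ∧ v ≠ ⊤ := by
  constructor <;> rintro rfl <;> simp at h

theorem ads_norm (nA nB NA NB : ℕ)
    (A : Set (Vec (nA + 1))) (B : Set (Vec (nB + 1)))
    (hA : NormAt A (Fin.last nA) NA) (hB : NormAt B 0 NB) :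
    NormAt (ads A B) (Fin.castAdd nB (Fin.last nA)) (NA + NB - 1) := by
  intro x
  set i : Fin (nA+1+nB) := Fin.castAdd nB (Fin.last nA) with hi
  set xa : Vec (nA+1) := x ∘ Fin.castAdd nB with hxa
  set xt : Vec nB := x ∘ Fin.natAdd (nA+1) with hxt
  set xb : Vec (nB+1) := Fin.cons (x i) xt with hxb
  have hAx := hA xa
  have hBx := hB xb
  obtain ⟨hA0top, hA1top⟩ := sum_ne_top hAx
  obtain ⟨hB0top, hB1top⟩ := sum_ne_top hBx
  obtain ⟨ya0, hya0, hda0⟩ := dS_exists xa _ hA0top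
  obtain ⟨ya1, hya1, hda1⟩ := dS_exists xa _ hA1top
  obtain ⟨yb0, hyb0, hdb0⟩ := dS_exists xb _ hB0top
  obtain ⟨yb1, hyb1, hdb1⟩ := dS_exists xb _ hB1top
  -- NA ≥ 1
  have hNA1 : 1 ≤ NA := by
    have h1 : (1:ℕ∞) ≤ dS ya1 (sec A (Fin.last nA) false) := by
      apply le_iInf₂
      intro y hy
      have hne : ya1 ≠ y := by
        intro e
        have h4 : y (Fin.last nA) = true := e ▸ hya1.2
        have h5 : y (Fin.last nA) = false := hy.2
        rw [h4] at h5
        exact Bool.noConfusion h5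
      have : 1 ≤ hammingDist ya1 y := Nat.one_le_iff_ne_zero.mpr (hammingDist_ne_zero.mpr hne)
      exact_mod_cast this
    have h2 := hA ya1
    have h3 : (1:ℕ∞) ≤ (NA : ℕ∞) :=
      le_trans (le_trans h1 le_self_add) h2
    exact_mod_cast h3
  -- construction of codewords in the amalgamated direct sum
  have key : ∀ (b : Bool) (ya : Vec (nA+1)) (yb : Vec (nB+1)),
      ya ∈ sec A (Fin.last nA) b → yb ∈ sec B 0 b →
      ∃ z ∈ sec (ads A B) i b,
        hammingDist x z + (if x i = b then 0 else 1)
          = hammingDist xa ya + hammingDist xb yb := by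
    rintro b ya yb ⟨hyaA, hyab⟩ ⟨hybB, hybb⟩
    have hsnoc : Fin.snoc (Fin.init ya) b = ya := by
      rw [← hyab]; exact Fin.snoc_init_self ya
    have hconsy : Fin.cons b (Fin.tail yb) = yb := by
      rw [← hybb]; exact Fin.cons_self_tail yb
    refine ⟨Fin.append ya (Fin.tail yb),
      ⟨⟨Fin.init ya, b, Fin.tail yb, ?_, ?_, ?_⟩, ?_⟩, ?_⟩
    · rw [hsnoc]; exact hyaA
    · rw [hconsy]; exact hybB
    · rw [hsnoc]
    · show Fin.append ya (Fin.tail yb) (Fin.castAdd nB (Fin.last nA)) = b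
      rw [Fin.append_left]
      exact hyab
    · have hsplit : hammingDist x (Fin.append ya (Fin.tail yb))
          = hammingDist xa ya + hammingDist xt (Fin.tail yb) := by
        rw [hd_split]
        congr 1
        · congr 1
          funext j
          exact Fin.append_left _ _ j
        · congr 1
          funext j
          exact Fin.append_right _ _ j
      have hcons : hammingDist xb yb
          = (if x i = b then 0 else 1) + hammingDist xt (Fin.tail yb) := by
        rw [hd_cons]
        have e1 : xb 0 = x i := by rw [hxb]; rfl
        have e2 : Fin.tail xb = xt := by rw [hxb]; exact Fin.tail_cons _ _
        rw [e1, e2, hybb]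
      rw [hsplit, hcons]
      ring
  obtain ⟨z0, hz0mem, hz0⟩ := key false ya0 yb0 hya0 hyb0
  obtain ⟨z1, hz1mem, hz1⟩ := key true ya1 yb1 hya1 hyb1
  have hb0 : dS x (sec (ads A B) i false) ≤ (hammingDist x z0 : ℕ∞) := dS_le hz0mem
  have hb1 : dS x (sec (ads A B) i true) ≤ (hammingDist x z1 : ℕ∞) := dS_le hz1mem
  have he : (if x i = false then 0 else 1) + (if x i = true then 0 else 1) = 1 := by
    cases hxi : x i <;> simp
  have hnat : hammingDist x z0 + hammingDist x z1 + 1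
      = (hammingDist xa ya0 + hammingDist xa ya1)
        + (hammingDist xb yb0 + hammingDist xb yb1) := by omega
  have hfin : ((hammingDist x z0 + hammingDist x z1 + 1 : ℕ) : ℕ∞) ≤ ((NA + NB : ℕ) : ℕ∞) := by
    rw [hnat]
    push_cast
    rw [hda0, hda1, hdb0, hdb1]
    exact add_le_add hAx hBx
  have hmain : dS x (sec (ads A B) i false) + dS x (sec (ads A B) i true) + 1
      ≤ ((NA + NB : ℕ) : ℕ∞) := by
    calc dS x (sec (ads A B) i false) + dS x (sec (ads A B) i true) + 1
        ≤ (hammingDist x z0 : ℕ∞) + (hammingDist x z1 : ℕ∞) + 1 :=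
          add_le_add (add_le_add hb0 hb1) le_rfl
      _ = ((hammingDist x z0 + hammingDist x z1 + 1 : ℕ) : ℕ∞) := by push_cast; ring
      _ ≤ ((NA + NB : ℕ) : ℕ∞) := hfin
  have hcast : ((NA + NB - 1 : ℕ) : ℕ∞) + 1 = ((NA + NB : ℕ) : ℕ∞) := by
    have h1 : (NA + NB - 1) + 1 = NA + NB := by omega
    exact_mod_cast h1
  rw [← hcast] at hmain
  exact (WithTop.add_le_add_iff_right WithTop.one_ne_top).mp hmain
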